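/- Let ρ : ℝ^d → ℝ be continuous and integrable with ρ(0) = 1, |ρ(t)| ≤ 1 for all t, inf_t ρ(t) > −1, and such that for every ε > 0, sup_{t ∉ (−ε,ε)^d} |ρ(t)| < 1. Let u_T be a function of T tending to ∞ as T → ∞. Then for every ε > 0, as T → ∞, ∫_{[−T,T]^d} Π_{j=1}^d (T − |t_j|) ( ∫_0^{ρ(t)} φ(u_T,u_T,y) dy ) dt is asymptotically equivalent to T^d ∫_{[−ε,ε]^d} ( ∫_0^{ρ(t)} φ(u_T,u_T,y) dy ) dt, i.e. the ratio of the two quantities tends to 1. -/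

import Mathlib

open MeasureTheory Filter

/-- The density at `(u,u)` of the centered bivariate Gaussian vector with unit variances
and correlation `y`: `φ(u,u,y) = exp(-u²/(1+y)) / (2π √(1-y²))`. -/
noncomputable def biGaussDensity (u y : ℝ) : ℝ :=
  Real.exp (-u ^ 2 / (1 + y)) / (2 * Real.pi * Real.sqrt (1 - y ^ 2))

lemma bg_nonneg (u y : ℝ) : 0 ≤ biGaussDensity u y := by
  unfold biGaussDensity
  positivity

lemma bg_upper {u y r m' : ℝ} (hm : -1 < m') (hy1 : m' ≤ y) (hy2 : y ≤ r) (hr : r < 1) :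
    biGaussDensity u y ≤
      Real.exp (-u ^ 2 / (1 + r)) / (2 * Real.pi * Real.sqrt ((1 - r) * (1 + m'))) := by
  unfold biGaussDensity
  have hy0 : (0:ℝ) < 1 + y := by linarith
  have hr0 : (0:ℝ) < 1 + r := by linarith
  have hs : Real.sqrt ((1 - r) * (1 + m')) ≤ Real.sqrt (1 - y ^ 2) := by
    apply Real.sqrt_le_sqrt
    nlinarith
  have hspos : (0:ℝ) < Real.sqrt ((1 - r) * (1 + m')) := by
    apply Real.sqrt_pos.2
    nlinarith
  apply div_le_div₀ (Real.exp_pos _).le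
  · apply Real.exp_le_exp.2
    rw [neg_div, neg_div, neg_le_neg_iff]
    exact div_le_div_of_nonneg_left (by positivity) hy0 (by linarith)
  · positivity
  · have h2pi : (0:ℝ) < 2 * Real.pi := by positivity
    nlinarith [Real.pi_pos]

lemma bg_integrableOn {m' : ℝ} (hm : -1 < m') (hm0 : m' ≤ 0) (u : ℝ) :
    IntegrableOn (biGaussDensity u) (Set.Icc m' 1) := by
  have hmeas : Measurable (biGaussDensity u) := by
    unfold biGaussDensity
    fun_prop
  have hdom : IntegrableOn
      (fun y => (2 * Real.pi * Real.sqrt (1 + m'))⁻¹ * (1 - y) ^ (-(1/2) : ℝ))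
      (Set.Icc m' 1) := by
    have h1 : IntervalIntegrable (fun x : ℝ => x ^ (-(1/2) : ℝ)) volume (1 - m') (1 - 1) :=
      intervalIntegral.intervalIntegrable_rpow' (by norm_num)
    have h2 := h1.comp_sub_left 1
    simp only [sub_sub_cancel] at h2
    have h3 : IntegrableOn (fun y : ℝ => (1 - y) ^ (-(1/2) : ℝ)) (Set.Icc m' 1) := by
      rw [← intervalIntegrable_iff_integrableOn_Icc_of_le (by linarith)]
      exact h2
    exact h3.const_mul _
  apply Integrable.mono hdom (hmeas.aestronglyMeasurable.restrict)
  refine (ae_restrict_iff' measurableSet_Icc).2 (Eventually.of_forall fun y hy => ?_)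
  obtain ⟨hy1, hy2⟩ := hy
  rw [Real.norm_eq_abs, Real.norm_eq_abs, abs_of_nonneg (bg_nonneg u y)]
  rcases eq_or_lt_of_le hy2 with h | h
  · subst h
    simp only [one_pow, sub_self, Real.sqrt_zero, mul_zero, div_zero, biGaussDensity]
    positivity
  · have h1y : (0:ℝ) < 1 - y := by linarith
    have hrw : (1 - y) ^ (-(1/2) : ℝ) = (Real.sqrt (1 - y))⁻¹ := by
      rw [Real.sqrt_eq_rpow, ← Real.rpow_neg h1y.le]
    rw [abs_of_nonneg (by positivity)]
    rw [hrw]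
    unfold biGaussDensity
    have hsy : Real.sqrt (1 - y) * Real.sqrt (1 + m') ≤ Real.sqrt (1 - y ^ 2) := by
      rw [← Real.sqrt_mul h1y.le]
      apply Real.sqrt_le_sqrt
      nlinarith
    have hspos : (0:ℝ) < Real.sqrt (1 - y) * Real.sqrt (1 + m') := by
      have : (0:ℝ) < 1 + m' := by linarith
      positivity
    calc Real.exp (-u ^ 2 / (1 + y)) / (2 * Real.pi * Real.sqrt (1 - y ^ 2))
        ≤ 1 / (2 * Real.pi * (Real.sqrt (1 - y) * Real.sqrt (1 + m'))) := by
          apply div_le_div₀ zero_le_one (Real.exp_le_one_iff.2 ?_) (by positivity) ?_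
          · exact div_nonpos_of_nonpos_of_nonneg (neg_nonpos.2 (sq_nonneg u)) (by linarith)
          · nlinarith [Real.pi_pos]
      _ = (2 * Real.pi * Real.sqrt (1 + m'))⁻¹ * (Real.sqrt (1 - y))⁻¹ := by
          rw [one_div, mul_inv, mul_inv, mul_inv]
          ring

lemma bg_key {m' : ℝ} (hm : -1 < m') (hm0 : m' ≤ 0) (u p r : ℝ)
    (h1 : m' ≤ p) (h2 : p ≤ r) (h3 : 0 ≤ r) (h4 : r < 1) :
    |∫ y in (0:ℝ)..p, biGaussDensity u y| ≤
      Real.exp (-u ^ 2 / (1 + r)) / (2 * Real.pi * Real.sqrt ((1 - r) * (1 + m'))) * |p| := by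
  have := intervalIntegral.norm_integral_le_of_norm_le_const
      (a := (0:ℝ)) (b := p) (f := biGaussDensity u)
      (C := Real.exp (-u ^ 2 / (1 + r)) / (2 * Real.pi * Real.sqrt ((1 - r) * (1 + m'))))
      (fun y hy => ?_)
  · simpa [Real.norm_eq_abs] using this
  · rw [Set.mem_uIoc] at hy
    rw [Real.norm_eq_abs, abs_of_nonneg (bg_nonneg u y)]
    have hy1 : m' ≤ y := by rcases hy with ⟨h, _⟩ | ⟨h, _⟩ <;> linarith
    have hy2 : y ≤ r := by rcases hy with ⟨_, h⟩ | ⟨_, h⟩ <;> linarith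
    exact bg_upper hm hy1 hy2 h4

lemma pow_sub_pow_le_aux (n : ℕ) {a b : ℝ} (hb : 0 ≤ b) (hba : b ≤ a) :
    a ^ (n + 1) - b ^ (n + 1) ≤ (n + 1) * (a - b) * a ^ n := by
  induction n with
  | zero => simp
  | succ n ih =>
    have hpow : b ^ (n + 1) ≤ a ^ (n + 1) := pow_le_pow_left₀ hb hba _
    have ha : 0 ≤ a := hb.trans hba
    have hpa : (0:ℝ) ≤ a ^ n := pow_nonneg ha n
    calc a ^ (n + 1 + 1) - b ^ (n + 1 + 1)
        = a * (a ^ (n + 1) - b ^ (n + 1)) + b ^ (n + 1) * (a - b) := by ring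
      _ ≤ a * ((n + 1) * (a - b) * a ^ n) + a ^ (n + 1) * (a - b) := by
          have h1 : a * (a ^ (n + 1) - b ^ (n + 1)) ≤ a * ((n + 1) * (a - b) * a ^ n) :=
            mul_le_mul_of_nonneg_left ih ha
          have h2 : b ^ (n + 1) * (a - b) ≤ a ^ (n + 1) * (a - b) :=
            mul_le_mul_of_nonneg_right hpow (by linarith)
          linarith
      _ = ((n:ℝ) + 1 + 1) * (a - b) * a ^ (n + 1) := by ring
      _ = (↑(n + 1) + 1) * (a - b) * a ^ (n + 1) := by push_cast; ring

lemma bg_primitive_continuousOn {m' : ℝ} (hm : -1 < m') (hm0 : m' ≤ 0) (u : ℝ) :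
    ContinuousOn (fun x => ∫ y in (0:ℝ)..x, biGaussDensity u y) (Set.Icc m' 1) := by
  have huIcc : Set.uIcc m' 1 = Set.Icc m' 1 := Set.uIcc_of_le (by linarith)
  have h := (bg_integrableOn hm hm0 u)
  rw [← huIcc] at h ⊢
  exact intervalIntegral.continuousOn_primitive_interval' h.intervalIntegrable
    (by rw [huIcc]; exact ⟨hm0, zero_le_one⟩)

lemma bg_intervalIntegrable (u : ℝ) {a b : ℝ} (ha : 0 ≤ a) (hab : a ≤ b) (hb : b ≤ 1) :
    IntervalIntegrable (biGaussDensity u) volume a b := by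
  apply IntegrableOn.intervalIntegrable
  apply (bg_integrableOn (m' := 0) (by norm_num) le_rfl u).mono_set
  rw [Set.uIcc_of_le hab]
  exact Set.Icc_subset_Icc ha hb

lemma bg_lower (u μ₀ θ p : ℝ) (h0μ : 0 ≤ μ₀) (hμθ : μ₀ ≤ θ) (hθ : θ < 1)
    (hθp : θ ≤ p) (hp : p ≤ 1) :
    (θ - μ₀) * (Real.exp (-u ^ 2 / (1 + μ₀)) / (2 * Real.pi)) ≤
      ∫ y in (0:ℝ)..p, biGaussDensity u y := by
  have h0θ : (0:ℝ) ≤ θ := h0μ.trans hμθ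
  have hθ1 : θ ≤ 1 := hθ.le
  have hμ1 : μ₀ ≤ 1 := hμθ.trans hθ1
  have i1 := bg_intervalIntegrable u le_rfl h0μ hμ1
  have i2 := bg_intervalIntegrable u h0μ hμθ hθ1
  have i3 := bg_intervalIntegrable u h0θ hθp hp
  have hsplit : (∫ y in (0:ℝ)..p, biGaussDensity u y) =
      (∫ y in (0:ℝ)..μ₀, biGaussDensity u y) + (∫ y in μ₀..θ, biGaussDensity u y)
        + (∫ y in θ..p, biGaussDensity u y) := by
    rw [intervalIntegral.integral_add_adjacent_intervals i1 i2,
      intervalIntegral.integral_add_adjacent_intervals (i1.trans i2) i3]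
  rw [hsplit]
  have n1 : (0:ℝ) ≤ ∫ y in (0:ℝ)..μ₀, biGaussDensity u y :=
    intervalIntegral.integral_nonneg h0μ (fun y _ => bg_nonneg u y)
  have n3 : (0:ℝ) ≤ ∫ y in θ..p, biGaussDensity u y :=
    intervalIntegral.integral_nonneg hθp (fun y _ => bg_nonneg u y)
  have n2 : (θ - μ₀) * (Real.exp (-u ^ 2 / (1 + μ₀)) / (2 * Real.pi)) ≤
      ∫ y in μ₀..θ, biGaussDensity u y := by
    have hconst : (∫ _ in μ₀..θ, (Real.exp (-u ^ 2 / (1 + μ₀)) / (2 * Real.pi)))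
        = (θ - μ₀) * (Real.exp (-u ^ 2 / (1 + μ₀)) / (2 * Real.pi)) := by
      rw [intervalIntegral.integral_const, smul_eq_mul]
    rw [← hconst]
    apply intervalIntegral.integral_mono_on hμθ intervalIntegrable_const i2
    intro y hy
    obtain ⟨hy1, hy2⟩ := hy
    have hy0 : 0 ≤ y := h0μ.trans hy1
    have hy1' : y ≤ θ := hy2
    have hsq : Real.sqrt (1 - y ^ 2) ≤ 1 := by
      rw [show (1:ℝ) = Real.sqrt 1 by simp]
      apply Real.sqrt_le_sqrt
      nlinarith [Real.sq_sqrt (by norm_num : (0:ℝ) ≤ 1)]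
    have hsqpos : 0 < Real.sqrt (1 - y ^ 2) := by
      apply Real.sqrt_pos.2
      nlinarith
    unfold biGaussDensity
    apply div_le_div₀ (Real.exp_pos _).le
    · apply Real.exp_le_exp.2
      rw [neg_div, neg_div, neg_le_neg_iff]
      exact div_le_div_of_nonneg_left (by positivity) (by linarith) (by linarith)
    · positivity
    · nlinarith [Real.pi_pos]
  linarith

lemma mem_pi_Icc {d : ℕ} {r : ℝ} {t : Fin d → ℝ} :
    t ∈ Set.Icc (fun _ => -r) ((fun _ => r) : Fin d → ℝ) ↔ ∀ i, |t i| ≤ r := by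
  simp only [Set.mem_Icc, Pi.le_def, abs_le]
  exact ⟨fun ⟨h1, h2⟩ i => ⟨h1 i, h2 i⟩, fun h => ⟨fun i => (h i).1, fun i => (h i).2⟩⟩

lemma pi_Icc_subset {d : ℕ} {a b : ℝ} (hab : a ≤ b) :
    Set.Icc (fun _ => -a) ((fun _ => a) : Fin d → ℝ) ⊆
      Set.Icc (fun _ => -b) ((fun _ => b) : Fin d → ℝ) :=
  Set.Icc_subset_Icc (fun i => by simpa using hab) (fun i => by simpa using hab)

lemma pi_Icc_volume {d : ℕ} {r : ℝ} (hr : 0 ≤ r) :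
    (volume (Set.Icc (fun _ => -r) ((fun _ => r) : Fin d → ℝ))).toReal = (2*r)^d := by
  rw [Real.volume_Icc_pi_toReal (fun i => by simp; linarith)]
  rw [show (fun _ : Fin d => r - -r) = fun _ : Fin d => 2*r from funext fun i => by ring]
  rw [Finset.prod_const, Finset.card_univ, Fintype.card_fin]

set_option maxHeartbeats 1000000 in
theorem variance_localization
    {d : ℕ} (hd : 0 < d) (ρ : (Fin d → ℝ) → ℝ)
    (hρcont : Continuous ρ) (hρint : Integrable ρ)
    (hρ0 : ρ 0 = 1) (hρle : ∀ t, |ρ t| ≤ 1)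
    -- `inf_t ρ(t) > -1`
    (hinf : ∃ m : ℝ, -1 < m ∧ ∀ t, m ≤ ρ t)
    -- for every `ε > 0`, `sup_{t ∉ (-ε,ε)^d} |ρ(t)| < 1`
    (hsup : ∀ ε : ℝ, 0 < ε → ∃ η : ℝ, η < 1 ∧
      ∀ t ∉ Set.pi Set.univ (fun _ : Fin d => Set.Ioo (-ε) ε), |ρ t| ≤ η)
    -- moving level `u_T → ∞`
    (uT : ℝ → ℝ) (huT : Tendsto uT atTop atTop) :
    ∀ ε : ℝ, 0 < ε →
      Tendsto (fun T : ℝ =>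
          (∫ t in Set.Icc (fun _ => -T) ((fun _ => T) : Fin d → ℝ),
              (∏ j, (T - |t j|)) * ∫ y in (0 : ℝ)..(ρ t), biGaussDensity (uT T) y)
            / (T ^ d * ∫ t in Set.Icc (fun _ => -ε) ((fun _ => ε) : Fin d → ℝ),
              ∫ y in (0 : ℝ)..(ρ t), biGaussDensity (uT T) y))
        atTop (nhds 1) := by
  intro ε hε
  obtain ⟨d', rfl⟩ : ∃ k, d = k + 1 := ⟨d - 1, (Nat.succ_pred_eq_of_pos hd).symm⟩
  obtain ⟨m, hm1, hm2⟩ := hinf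
  set m' := min m 0 with hm'def
  have hm'1 : -1 < m' := lt_min hm1 (by norm_num)
  have hm'0 : m' ≤ 0 := min_le_right _ _
  have hm'le : ∀ t, m' ≤ ρ t := fun t => (min_le_left m 0).trans (hm2 t)
  obtain ⟨η, hη1, hη2⟩ := hsup ε hε
  set η₀ := max η 0 with hη₀def
  have hη₀0 : 0 ≤ η₀ := le_max_right _ _
  have hη₀1 : η₀ < 1 := max_lt hη1 one_pos
  set θ := (1 + η₀) / 2 with hθdef
  set μ' := (1 + 3 * η₀) / 4 with hμ'def
  have hημ : η₀ < μ' := by rw [hμ'def]; linarith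
  have hμθ : μ' < θ := by rw [hμ'def, hθdef]; linarith
  have hθ1 : θ < 1 := by rw [hθdef]; linarith
  have hμ'0 : 0 < μ' := by rw [hμ'def]; linarith
  -- choose δ
  obtain ⟨δ, hδ0, hδε, hδθ⟩ : ∃ δ : ℝ, 0 < δ ∧ δ ≤ ε ∧
      ∀ t ∈ Set.Icc (fun _ => -δ) ((fun _ => δ) : Fin (d'+1) → ℝ), θ ≤ ρ t := by
    have hopen : IsOpen (ρ ⁻¹' Set.Ioi θ) := (isOpen_Ioi).preimage hρcont
    have h0mem : (0 : Fin (d'+1) → ℝ) ∈ ρ ⁻¹' Set.Ioi θ := by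
      simp only [Set.mem_preimage, Set.mem_Ioi, hρ0]
      linarith
    obtain ⟨r, hr0, hball⟩ := Metric.isOpen_iff.1 hopen 0 h0mem
    refine ⟨min (r / 2) ε, lt_min (by linarith) hε, min_le_right _ _, fun t ht => ?_⟩
    have hmem : t ∈ Metric.ball (0 : Fin (d'+1) → ℝ) r := by
      rw [Metric.mem_ball]
      have hle : dist t 0 ≤ min (r / 2) ε := by
        rw [dist_pi_le_iff (le_of_lt (lt_min (by linarith) hε))]
        intro i
        rw [Real.dist_eq, Pi.zero_apply, sub_zero]
        exact mem_pi_Icc.1 ht i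
      calc dist t 0 ≤ min (r / 2) ε := hle
        _ ≤ r / 2 := min_le_left _ _
        _ < r := by linarith
    exact le_of_lt (hball hmem)
  -- constants
  set M := ∫ t : Fin (d'+1) → ℝ, |ρ t| with hMdef
  have hM0 : 0 ≤ M := integral_nonneg (fun t => abs_nonneg _)
  set s₀ := 2 * Real.pi * Real.sqrt ((1 - η₀) * (1 + m')) with hs₀def
  have hs₀pos : 0 < s₀ := by
    have h1 : (0:ℝ) < (1 - η₀) * (1 + m') := by nlinarith
    have := Real.sqrt_pos.2 h1
    positivity
  set sm := 2 * Real.pi * Real.sqrt ((1 - (0:ℝ)) * (1 + m')) with hsmdef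
  have hsmpos : 0 < sm := by
    have h1 : (0:ℝ) < (1 - (0:ℝ)) * (1 + m') := by nlinarith
    have := Real.sqrt_pos.2 h1
    positivity
  set cθ := θ - μ' with hcθdef
  have hcθ0 : 0 < cθ := by rw [hcθdef]; linarith
  set C₁ : ℝ → ℝ := fun u => Real.exp (-u ^ 2 / (1 + η₀)) / s₀ with hC₁def
  set B₂ : ℝ → ℝ := fun u => Real.exp (-u ^ 2 / (1 + (0:ℝ))) / sm with hB₂def
  set Lo : ℝ → ℝ := fun u => (2 * δ) ^ (d'+1) * (cθ * (Real.exp (-u ^ 2 / (1 + μ')) / (2 * Real.pi))) / 2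
    with hLodef
  have hLopos : ∀ u, 0 < Lo u := by
    intro u
    rw [hLodef]
    have := Real.pi_pos
    positivity
  set β := 1 / (1 + η₀) - 1 / (1 + μ') with hβdef
  have hβpos : 0 < β := by
    rw [hβdef]
    have h1 : (0:ℝ) < 1 + η₀ := by linarith
    have h2 : (0:ℝ) < 1 + μ' := by linarith
    rw [sub_pos]
    exact one_div_lt_one_div_of_lt h1 (by linarith)
  set K := 2 / (s₀ * ((2 * δ) ^ (d'+1) * (cθ / (2 * Real.pi)))) with hKdef
  have hKpos : 0 < K := by
    rw [hKdef]
    have := Real.pi_pos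
    positivity
  have hC₁eq : ∀ u, C₁ u = (K * Real.exp (-(β * u ^ 2))) * Lo u := by
    intro u
    rw [hC₁def, hKdef, hLodef]
    have h1 : (0:ℝ) < 1 + η₀ := by linarith
    have h2 : (0:ℝ) < 1 + μ' := by linarith
    have hexp : Real.exp (-(β * u ^ 2)) * Real.exp (-u ^ 2 / (1 + μ'))
        = Real.exp (-u ^ 2 / (1 + η₀)) := by
      rw [← Real.exp_add]
      congr 1
      rw [hβdef]
      field_simp
      ring
    have hπ := Real.pi_ne_zero
    have hδd : ((2:ℝ) * δ) ^ (d'+1) ≠ 0 := by positivity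
    field_simp
    rw [← neg_div, ← neg_div, ← hexp]
    ring
  set bnd : ℝ → ℝ := fun T => 3 * ((d':ℝ) + 1) * ε / T + K * M * Real.exp (-(β * (uT T) ^ 2))
    with hbnddef
  have hbnd0 : Tendsto bnd atTop (nhds 0) := by
    have h1 : Tendsto (fun T : ℝ => 3 * ((d':ℝ) + 1) * ε / T) atTop (nhds 0) :=
      tendsto_const_nhds.div_atTop tendsto_id
    have hu2 : Tendsto (fun T => β * (uT T) ^ 2) atTop atTop :=
      (((tendsto_pow_atTop (two_ne_zero)).comp huT).const_mul_atTop hβpos)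
    have h2 : Tendsto (fun T => K * M * Real.exp (-(β * (uT T) ^ 2))) atTop (nhds 0) := by
      have h3 := (Real.tendsto_exp_neg_atTop_nhds_zero.comp hu2).const_mul (K * M)
      simpa using h3
    have := h1.add h2
    simpa using this
  have hevB : ∀ᶠ u in atTop, (2 * ε) ^ (d'+1) * B₂ u ≤ Lo u := by
    set γ := 1 - 1 / (1 + μ') with hγdef
    have hγpos : 0 < γ := by
      rw [hγdef, sub_pos]
      have h2 : (0:ℝ) < 1 + μ' := by linarith
      rw [div_lt_one h2]
      linarith
    set cval := (2 * δ) ^ (d'+1) * cθ / (4 * Real.pi) with hcvaldef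
    have hcvalpos : 0 < cval := by
      rw [hcvaldef]
      have := Real.pi_pos
      positivity
    have hψ : Tendsto (fun u : ℝ => (2 * ε) ^ (d'+1) / sm * Real.exp (-(γ * u ^ 2)))
        atTop (nhds 0) := by
      have hu2 : Tendsto (fun u : ℝ => γ * u ^ 2) atTop atTop :=
        ((tendsto_pow_atTop (two_ne_zero)).const_mul_atTop hγpos)
      have h3 := (Real.tendsto_exp_neg_atTop_nhds_zero.comp hu2).const_mul ((2 * ε) ^ (d'+1) / sm)
      simpa using h3
    filter_upwards [hψ.eventually_lt_const hcvalpos] with u hu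
    have key : (2 * ε) ^ (d'+1) * B₂ u
        = ((2 * ε) ^ (d'+1) / sm * Real.exp (-(γ * u ^ 2))) * Real.exp (-u ^ 2 / (1 + μ')) := by
      have h2 : (1:ℝ) + μ' ≠ 0 := by positivity
      have hexp : Real.exp (-(γ * u ^ 2)) * Real.exp (-u ^ 2 / (1 + μ'))
          = Real.exp (-u ^ 2 / (1 + (0:ℝ))) := by
        rw [← Real.exp_add]
        congr 1
        rw [hγdef]
        field_simp
        ring
      simp only [hB₂def]
      rw [mul_assoc, hexp]
      ring
    have key2 : Lo u = cval * Real.exp (-u ^ 2 / (1 + μ')) := by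
      simp only [hLodef, hcvaldef]
      ring
    rw [key, key2]
    exact mul_le_mul_of_nonneg_right hu.le (Real.exp_nonneg _)
  have hBnd : ∀ᶠ T in atTop,
      ‖(∫ t in Set.Icc (fun _ => -T) ((fun _ => T) : Fin (d'+1) → ℝ),
              (∏ j, (T - |t j|)) * ∫ y in (0 : ℝ)..(ρ t), biGaussDensity (uT T) y)
            / (T ^ (d'+1) * ∫ t in Set.Icc (fun _ => -ε) ((fun _ => ε) : Fin (d'+1) → ℝ),
              ∫ y in (0 : ℝ)..(ρ t), biGaussDensity (uT T) y) - 1‖ ≤ bnd T := by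
    filter_upwards [eventually_ge_atTop (max ε 1), huT.eventually hevB] with T hTA hTB
    set u := uT T with hudef
    have hεT : ε ≤ T := le_trans (le_max_left _ _) hTA
    have hT1 : (1:ℝ) ≤ T := le_trans (le_max_right _ _) hTA
    have hT0 : (0:ℝ) < T := lt_of_lt_of_le one_pos hT1
    set g : (Fin (d'+1) → ℝ) → ℝ := fun t => ∫ y in (0:ℝ)..(ρ t), biGaussDensity u y with hgdef
    have hmaps : ∀ t, ρ t ∈ Set.Icc m' 1 := fun t => ⟨hm'le t, (abs_le.1 (hρle t)).2⟩
    have hgcont : Continuous g :=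
      (bg_primitive_continuousOn hm'1 hm'0 u).comp_continuous hρcont hmaps
    have hg_int : ∀ r : ℝ,
        IntegrableOn g (Set.Icc (fun _ => -r) ((fun _ => r) : Fin (d'+1) → ℝ)) :=
      fun r => hgcont.integrableOn_Icc
    have hprodcont : Continuous (fun t : Fin (d'+1) → ℝ => ∏ j, (T - |t j|)) :=
      continuous_finset_prod _ (fun j _ => continuous_const.sub ((continuous_apply j).abs))
    have hf_int : IntegrableOn (fun t => (∏ j, (T - |t j|)) * g t)
        (Set.Icc (fun _ => -T) ((fun _ => T) : Fin (d'+1) → ℝ)) :=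
      (hprodcont.mul hgcont).integrableOn_Icc
    set G := ∫ t in Set.Icc (fun _ => -ε) ((fun _ => ε) : Fin (d'+1) → ℝ), g t with hGdef
    set N := ∫ t in Set.Icc (fun _ => -T) ((fun _ => T) : Fin (d'+1) → ℝ),
      (∏ j, (T - |t j|)) * g t with hNdef
    have hB₂nonneg : 0 ≤ B₂ u := by
      simp only [hB₂def]
      positivity
    -- pointwise lower bound for g
    have hglb : ∀ t, -B₂ u ≤ g t := by
      intro t
      rcases le_or_gt 0 (ρ t) with h | h
      · exact le_trans (neg_nonpos.2 hB₂nonneg)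
          (intervalIntegral.integral_nonneg h (fun y _ => bg_nonneg u y))
      · have hk := bg_key hm'1 hm'0 u (ρ t) 0 (hm'le t) h.le le_rfl one_pos
        have hb : Real.exp (-u ^ 2 / (1 + (0:ℝ))) / (2 * Real.pi * Real.sqrt ((1 - (0:ℝ)) * (1 + m'))) * |ρ t|
            ≤ B₂ u := by
          simp only [hB₂def, hsmdef]
          have h1 : (0:ℝ) ≤ Real.exp (-u ^ 2 / (1 + (0:ℝ))) / (2 * Real.pi * Real.sqrt ((1 - (0:ℝ)) * (1 + m'))) := by
            have := Real.pi_pos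
            positivity
          calc Real.exp (-u ^ 2 / (1 + (0:ℝ))) / (2 * Real.pi * Real.sqrt ((1 - (0:ℝ)) * (1 + m'))) * |ρ t|
              ≤ Real.exp (-u ^ 2 / (1 + (0:ℝ))) / (2 * Real.pi * Real.sqrt ((1 - (0:ℝ)) * (1 + m'))) * 1 :=
                mul_le_mul_of_nonneg_left (hρle t) h1
            _ = Real.exp (-u ^ 2 / (1 + (0:ℝ))) / (2 * Real.pi * Real.sqrt ((1 - (0:ℝ)) * (1 + m'))) := mul_one _
        have := (abs_le.1 (hk.trans hb)).1
        simpa [hgdef] using this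
    -- Step A : lower bound for G
    have hsub_δε : Set.Icc (fun _ => -δ) ((fun _ => δ) : Fin (d'+1) → ℝ) ⊆
        Set.Icc (fun _ => -ε) ((fun _ => ε) : Fin (d'+1) → ℝ) := pi_Icc_subset hδε
    have hvol_fin : ∀ r : ℝ,
        volume (Set.Icc (fun _ => -r) ((fun _ => r) : Fin (d'+1) → ℝ)) < ⊤ :=
      fun r => isCompact_Icc.measure_lt_top
    have hGsplit : G = (∫ t in Set.Icc (fun _ => -δ) ((fun _ => δ) : Fin (d'+1) → ℝ), g t)
        + ∫ t in (Set.Icc (fun _ => -ε) ((fun _ => ε) : Fin (d'+1) → ℝ) \ Set.Icc (fun _ => -δ) ((fun _ => δ) : Fin (d'+1) → ℝ)), g t := by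
      rw [hGdef]
      rw [← setIntegral_union disjoint_sdiff_self_right
        (measurableSet_Icc.diff measurableSet_Icc) (hg_int δ)
        ((hg_int ε).mono_set Set.diff_subset)]
      rw [Set.union_diff_cancel hsub_δε]
    have hlow1 : (2*δ)^(d'+1) * (cθ * (Real.exp (-u ^ 2 / (1 + μ')) / (2 * Real.pi)))
        ≤ ∫ t in Set.Icc (fun _ => -δ) ((fun _ => δ) : Fin (d'+1) → ℝ), g t := by
      have hci : IntegrableOn
          (fun _ : Fin (d'+1) → ℝ => cθ * (Real.exp (-u ^ 2 / (1 + μ')) / (2 * Real.pi)))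
          (Set.Icc (fun _ => -δ) ((fun _ => δ) : Fin (d'+1) → ℝ)) :=
        integrableOn_const (hvol_fin δ).ne
      have h1 := setIntegral_mono_on hci (hg_int δ) measurableSet_Icc
        (fun t ht => bg_lower u μ' θ (ρ t) hμ'0.le hμθ.le hθ1 (hδθ t ht) (hmaps t).2)
      rw [setIntegral_const, smul_eq_mul, measureReal_def, pi_Icc_volume hδ0.le] at h1
      exact h1
    have hlow2 : -((2*ε)^(d'+1) * B₂ u)
        ≤ ∫ t in (Set.Icc (fun _ => -ε) ((fun _ => ε) : Fin (d'+1) → ℝ) \ Set.Icc (fun _ => -δ) ((fun _ => δ) : Fin (d'+1) → ℝ)), g t := by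
      have hci : IntegrableOn (fun _ : Fin (d'+1) → ℝ => -B₂ u)
          (Set.Icc (fun _ => -ε) ((fun _ => ε) : Fin (d'+1) → ℝ) \ Set.Icc (fun _ => -δ) ((fun _ => δ) : Fin (d'+1) → ℝ)) :=
        integrableOn_const (lt_of_le_of_lt (measure_mono Set.diff_subset) (hvol_fin ε)).ne
      have h1 := setIntegral_mono_on hci ((hg_int ε).mono_set Set.diff_subset)
        (measurableSet_Icc.diff measurableSet_Icc) (fun t _ => hglb t)
      rw [setIntegral_const, smul_eq_mul, measureReal_def] at h1
      refine le_trans ?_ h1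
      have hvle : (volume (Set.Icc (fun _ => -ε) ((fun _ => ε) : Fin (d'+1) → ℝ) \ Set.Icc (fun _ => -δ) ((fun _ => δ) : Fin (d'+1) → ℝ))).toReal ≤ (2*ε)^(d'+1) := by
        rw [← pi_Icc_volume (le_of_lt hε)]
        exact ENNReal.toReal_mono (hvol_fin ε).ne (measure_mono Set.diff_subset)
      nlinarith [mul_le_mul_of_nonneg_right hvle hB₂nonneg]
    have hGlo : Lo u ≤ G := by
      have h2Lo : (2*δ)^(d'+1) * (cθ * (Real.exp (-u ^ 2 / (1 + μ')) / (2 * Real.pi)))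
          = 2 * Lo u := by
        simp only [hLodef]
        ring
      rw [hGsplit]
      have := hTB
      linarith
    have hGpos : 0 < G := lt_of_lt_of_le (hLopos u) hGlo
    have hApos : 0 < T^(d'+1) * G := by positivity
    -- Step B : decomposition of N
    have hsub_eT : Set.Icc (fun _ => -ε) ((fun _ => ε) : Fin (d'+1) → ℝ) ⊆
        Set.Icc (fun _ => -T) ((fun _ => T) : Fin (d'+1) → ℝ) := pi_Icc_subset hεT
    have hNsplit : N = (∫ t in Set.Icc (fun _ => -ε) ((fun _ => ε) : Fin (d'+1) → ℝ),
          (∏ j, (T - |t j|)) * g t)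
        + ∫ t in (Set.Icc (fun _ => -T) ((fun _ => T) : Fin (d'+1) → ℝ) \ Set.Icc (fun _ => -ε) ((fun _ => ε) : Fin (d'+1) → ℝ)),
          (∏ j, (T - |t j|)) * g t := by
      rw [hNdef, ← setIntegral_union disjoint_sdiff_self_right
        (measurableSet_Icc.diff measurableSet_Icc) (hf_int.mono_set hsub_eT)
        (hf_int.mono_set Set.diff_subset), Set.union_diff_cancel hsub_eT]
    have hint2 : IntegrableOn (fun t => ((∏ j, (T - |t j|)) - T^(d'+1)) * g t)
        (Set.Icc (fun _ => -ε) ((fun _ => ε) : Fin (d'+1) → ℝ)) :=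
      ((hprodcont.sub continuous_const).mul hgcont).integrableOn_Icc
    have hsplit2 : (∫ t in Set.Icc (fun _ => -ε) ((fun _ => ε) : Fin (d'+1) → ℝ),
          (∏ j, (T - |t j|)) * g t)
        = T^(d'+1) * G + ∫ t in Set.Icc (fun _ => -ε) ((fun _ => ε) : Fin (d'+1) → ℝ),
          ((∏ j, (T - |t j|)) - T^(d'+1)) * g t := by
      have heq : ∀ t : Fin (d'+1) → ℝ, (∏ j, (T - |t j|)) * g t
          = T^(d'+1) * g t + ((∏ j, (T - |t j|)) - T^(d'+1)) * g t := fun t => by ring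
      simp only [heq]
      rw [integral_add ((hg_int ε).const_mul _) hint2, integral_const_mul, ← hGdef]
    -- E1 bound
    have hprod_bounds : ∀ t ∈ Set.Icc (fun _ => -ε) ((fun _ => ε) : Fin (d'+1) → ℝ),
        |(∏ j, (T - |t j|)) - T^(d'+1)| ≤ ((d':ℝ)+1)*ε*T^d' := by
      intro t ht
      have h1 : ∀ i, |t i| ≤ ε := mem_pi_Icc.1 ht
      have hup : (∏ j, (T - |t j|)) ≤ T^(d'+1) := by
        calc (∏ j, (T - |t j|)) ≤ ∏ _j : Fin (d'+1), T :=
            Finset.prod_le_prod (fun j _ => by have := h1 j; linarith)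
              (fun j _ => by have := abs_nonneg (t j); linarith)
          _ = T^(d'+1) := by rw [Finset.prod_const, Finset.card_univ, Fintype.card_fin]
      have hlowp : (T-ε)^(d'+1) ≤ ∏ j, (T - |t j|) := by
        have heq2 : ((T-ε)^(d'+1) : ℝ) = ∏ _j : Fin (d'+1), (T-ε) := by
          rw [Finset.prod_const, Finset.card_univ, Fintype.card_fin]
        rw [heq2]
        exact Finset.prod_le_prod (fun j _ => by linarith) (fun j _ => by have := h1 j; linarith)
      have hber := pow_sub_pow_le_aux d' (a := T) (b := T - ε) (by linarith) (by linarith)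
      have hTsub : T - (T - ε) = ε := by ring
      rw [hTsub] at hber
      rw [abs_of_nonpos (by linarith)]
      linarith
    have hE₁ : |∫ t in Set.Icc (fun _ => -ε) ((fun _ => ε) : Fin (d'+1) → ℝ),
          ((∏ j, (T - |t j|)) - T^(d'+1)) * g t|
        ≤ (((d':ℝ)+1)*ε*T^d') * (3*G) := by
      have habs : |∫ t in Set.Icc (fun _ => -ε) ((fun _ => ε) : Fin (d'+1) → ℝ),
            ((∏ j, (T - |t j|)) - T^(d'+1)) * g t|
          ≤ ∫ t in Set.Icc (fun _ => -ε) ((fun _ => ε) : Fin (d'+1) → ℝ),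
            |((∏ j, (T - |t j|)) - T^(d'+1)) * g t| := by
        have := norm_integral_le_integral_norm
          (μ := volume.restrict (Set.Icc (fun _ => -ε) ((fun _ => ε) : Fin (d'+1) → ℝ)))
          (f := fun t => ((∏ j, (T - |t j|)) - T^(d'+1)) * g t)
        simpa only [Real.norm_eq_abs] using this
      have hmono : (∫ t in Set.Icc (fun _ => -ε) ((fun _ => ε) : Fin (d'+1) → ℝ),
            |((∏ j, (T - |t j|)) - T^(d'+1)) * g t|)
          ≤ ∫ t in Set.Icc (fun _ => -ε) ((fun _ => ε) : Fin (d'+1) → ℝ),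
            (((d':ℝ)+1)*ε*T^d') * |g t| := by
        apply setIntegral_mono_on hint2.abs (((hg_int ε).abs).const_mul _) measurableSet_Icc
        intro t ht
        rw [abs_mul]
        exact mul_le_mul_of_nonneg_right (hprod_bounds t ht) (abs_nonneg _)
      have hgabs : (∫ t in Set.Icc (fun _ => -ε) ((fun _ => ε) : Fin (d'+1) → ℝ), |g t|)
          ≤ 3 * G := by
        have hptw : ∀ t, |g t| ≤ g t + 2*B₂ u := by
          intro t
          have h6 := hglb t
          exact abs_le.2 ⟨by linarith, by linarith⟩
        have hconst2 : IntegrableOn (fun _ : Fin (d'+1) → ℝ => 2*B₂ u)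
            (Set.Icc (fun _ => -ε) ((fun _ => ε) : Fin (d'+1) → ℝ)) :=
          integrableOn_const (hvol_fin ε).ne
        have h3 := setIntegral_mono_on ((hg_int ε).abs) ((hg_int ε).add hconst2)
          measurableSet_Icc (fun t _ => hptw t)
        have hsum_eq : (∫ t in Set.Icc (fun _ => -ε) ((fun _ => ε) : Fin (d'+1) → ℝ),
              (g t + 2*B₂ u))
            = G + (2*ε)^(d'+1) * (2*B₂ u) := by
          rw [integral_add (hg_int ε) hconst2, setIntegral_const, smul_eq_mul,
            measureReal_def, pi_Icc_volume hε.le, ← hGdef]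
        have := hTB
        calc (∫ t in Set.Icc (fun _ => -ε) ((fun _ => ε) : Fin (d'+1) → ℝ), |g t|)
            ≤ ∫ t in Set.Icc (fun _ => -ε) ((fun _ => ε) : Fin (d'+1) → ℝ),
              (g t + 2*B₂ u) := h3
          _ = G + (2*ε)^(d'+1) * (2*B₂ u) := hsum_eq
          _ ≤ 3 * G := by linarith
      calc |∫ t in Set.Icc (fun _ => -ε) ((fun _ => ε) : Fin (d'+1) → ℝ),
            ((∏ j, (T - |t j|)) - T^(d'+1)) * g t|
          ≤ ∫ t in Set.Icc (fun _ => -ε) ((fun _ => ε) : Fin (d'+1) → ℝ),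
            (((d':ℝ)+1)*ε*T^d') * |g t| := le_trans habs hmono
        _ = (((d':ℝ)+1)*ε*T^d') * ∫ t in Set.Icc (fun _ => -ε) ((fun _ => ε) : Fin (d'+1) → ℝ),
            |g t| := integral_const_mul _ _
        _ ≤ (((d':ℝ)+1)*ε*T^d') * (3*G) := by
            apply mul_le_mul_of_nonneg_left hgabs (by positivity)
    -- E2 bound
    have hE₂ : |∫ t in (Set.Icc (fun _ => -T) ((fun _ => T) : Fin (d'+1) → ℝ) \ Set.Icc (fun _ => -ε) ((fun _ => ε) : Fin (d'+1) → ℝ)),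
          (∏ j, (T - |t j|)) * g t|
        ≤ T^(d'+1) * (C₁ u * M) := by
      have hC₁0 : 0 ≤ C₁ u := by
        simp only [hC₁def]
        positivity
      have habs : |∫ t in (Set.Icc (fun _ => -T) ((fun _ => T) : Fin (d'+1) → ℝ) \ Set.Icc (fun _ => -ε) ((fun _ => ε) : Fin (d'+1) → ℝ)),
            (∏ j, (T - |t j|)) * g t|
          ≤ ∫ t in (Set.Icc (fun _ => -T) ((fun _ => T) : Fin (d'+1) → ℝ) \ Set.Icc (fun _ => -ε) ((fun _ => ε) : Fin (d'+1) → ℝ)),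
            |(∏ j, (T - |t j|)) * g t| := by
        have := norm_integral_le_integral_norm
          (μ := volume.restrict (Set.Icc (fun _ => -T) ((fun _ => T) : Fin (d'+1) → ℝ) \ Set.Icc (fun _ => -ε) ((fun _ => ε) : Fin (d'+1) → ℝ)))
          (f := fun t => (∏ j, (T - |t j|)) * g t)
        simpa only [Real.norm_eq_abs] using this
      have hmono : (∫ t in (Set.Icc (fun _ => -T) ((fun _ => T) : Fin (d'+1) → ℝ) \ Set.Icc (fun _ => -ε) ((fun _ => ε) : Fin (d'+1) → ℝ)),
            |(∏ j, (T - |t j|)) * g t|)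
          ≤ ∫ t in (Set.Icc (fun _ => -T) ((fun _ => T) : Fin (d'+1) → ℝ) \ Set.Icc (fun _ => -ε) ((fun _ => ε) : Fin (d'+1) → ℝ)),
            (T^(d'+1) * C₁ u) * |ρ t| := by
        apply setIntegral_mono_on ((hf_int.mono_set Set.diff_subset).abs)
          (((hρint.abs).const_mul _).integrableOn)
          (measurableSet_Icc.diff measurableSet_Icc)
        intro t ht
        obtain ⟨ht1, ht2⟩ := ht
        have hnotin : t ∉ Set.pi Set.univ (fun _ : Fin (d'+1) => Set.Ioo (-ε) ε) := by
          intro hmem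
          apply ht2
          apply mem_pi_Icc.2
          intro i
          have := hmem i (Set.mem_univ i)
          exact abs_le.2 ⟨this.1.le, this.2.le⟩
        have hρη : |ρ t| ≤ η₀ := le_trans (hη2 t hnotin) (le_max_left _ _)
        have hgk : |g t| ≤ C₁ u * |ρ t| := by
          have hk := bg_key hm'1 hm'0 u (ρ t) η₀ (hm'le t) ((abs_le.1 hρη).2) hη₀0 hη₀1
          simpa only [hgdef, hC₁def, hs₀def] using hk
        have h1T : ∀ i, |t i| ≤ T := mem_pi_Icc.1 ht1
        have hprod0 : 0 ≤ ∏ j, (T - |t j|) :=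
          Finset.prod_nonneg (fun j _ => by have := h1T j; linarith)
        have hprodT : (∏ j, (T - |t j|)) ≤ T^(d'+1) := by
          calc (∏ j, (T - |t j|)) ≤ ∏ _j : Fin (d'+1), T :=
              Finset.prod_le_prod (fun j _ => by have := h1T j; linarith)
                (fun j _ => by have := abs_nonneg (t j); linarith)
            _ = T^(d'+1) := by rw [Finset.prod_const, Finset.card_univ, Fintype.card_fin]
        rw [abs_mul, abs_of_nonneg hprod0]
        calc (∏ j, (T - |t j|)) * |g t| ≤ T^(d'+1) * (C₁ u * |ρ t|) :=
            mul_le_mul hprodT hgk (abs_nonneg _) (by positivity)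
          _ = (T^(d'+1) * C₁ u) * |ρ t| := by ring
      have hfin : (∫ t in (Set.Icc (fun _ => -T) ((fun _ => T) : Fin (d'+1) → ℝ) \ Set.Icc (fun _ => -ε) ((fun _ => ε) : Fin (d'+1) → ℝ)),
            (T^(d'+1) * C₁ u) * |ρ t|)
          ≤ T^(d'+1) * (C₁ u * M) := by
        rw [integral_const_mul]
        have h4 : (∫ t in (Set.Icc (fun _ => -T) ((fun _ => T) : Fin (d'+1) → ℝ) \ Set.Icc (fun _ => -ε) ((fun _ => ε) : Fin (d'+1) → ℝ)), |ρ t|) ≤ M := by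
          rw [hMdef]
          exact setIntegral_le_integral (hρint.abs) (Eventually.of_forall (fun t => abs_nonneg _))
        calc (T^(d'+1) * C₁ u) * ∫ t in (Set.Icc (fun _ => -T) ((fun _ => T) : Fin (d'+1) → ℝ) \ Set.Icc (fun _ => -ε) ((fun _ => ε) : Fin (d'+1) → ℝ)), |ρ t|
            ≤ (T^(d'+1) * C₁ u) * M := by
              apply mul_le_mul_of_nonneg_left h4 (by positivity)
          _ = T^(d'+1) * (C₁ u * M) := by ring
      exact le_trans habs (le_trans hmono hfin)
    -- assembly
    have hNsum : N - T^(d'+1)*G = (∫ t in Set.Icc (fun _ => -ε) ((fun _ => ε) : Fin (d'+1) → ℝ),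
          ((∏ j, (T - |t j|)) - T^(d'+1)) * g t)
        + ∫ t in (Set.Icc (fun _ => -T) ((fun _ => T) : Fin (d'+1) → ℝ) \ Set.Icc (fun _ => -ε) ((fun _ => ε) : Fin (d'+1) → ℝ)),
          (∏ j, (T - |t j|)) * g t := by
      rw [hNsplit, hsplit2]
      ring
    have hbnd_eq : bnd T = 3*((d':ℝ)+1)*ε/T + K*M*Real.exp (-(β*u^2)) := by
      simp only [hbnddef, hudef]
    have hbound : |N - T^(d'+1)*G| ≤ bnd T * (T^(d'+1)*G) := by
      rw [hNsum]
      refine le_trans (abs_add_le _ _) (le_trans (add_le_add hE₁ hE₂) ?_)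
      have hb1 : (((d':ℝ)+1)*ε*T^d') * (3*G) = (3*((d':ℝ)+1)*ε/T) * (T^(d'+1)*G) := by
        rw [pow_succ]
        field_simp
      have h2 : C₁ u ≤ (K * Real.exp (-(β * u^2))) * G := by
        rw [hC₁eq u]
        exact mul_le_mul_of_nonneg_left hGlo (by positivity)
      have hb2 : T^(d'+1) * (C₁ u * M) ≤ (K * M * Real.exp (-(β * u^2))) * (T^(d'+1)*G) := by
        calc T^(d'+1) * (C₁ u * M)
            ≤ T^(d'+1) * (((K * Real.exp (-(β * u^2))) * G) * M) := by
              apply mul_le_mul_of_nonneg_left (mul_le_mul_of_nonneg_right h2 hM0) (by positivity)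
          _ = (K * M * Real.exp (-(β * u^2))) * (T^(d'+1)*G) := by ring
      have hdistrib : (3*((d':ℝ)+1)*ε/T + K*M*Real.exp (-(β*u^2))) * (T^(d'+1)*G)
          = 3*((d':ℝ)+1)*ε/T * (T^(d'+1)*G) + K*M*Real.exp (-(β*u^2)) * (T^(d'+1)*G) :=
        add_mul _ _ _
      rw [hbnd_eq, hdistrib]
      exact add_le_add (le_of_eq hb1) hb2
    rw [Real.norm_eq_abs]
    have heq3 : N / (T^(d'+1)*G) - 1 = (N - T^(d'+1)*G)/(T^(d'+1)*G) := by
      field_simp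
    rw [heq3, abs_div, abs_of_pos hApos, div_le_iff₀ hApos]
    exact hbound
  have hlim := squeeze_zero_norm' hBnd hbnd0
  have := hlim.add_const 1
  simpa using this
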